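/- For m ≥ 1 and ν with mν > 1, and any l_n → ∞, the double sum Σ_{i=1}^n Σ_{j=1}^n 1/((i²+j²)^m + cn²)^ν is bounded above and below by constant multiples of (cn²)^{-ν+1/m}, uniformly for c ∈ [l_n/n², n^{2m-2}] as n → ∞. -/

import Mathlib

open Finset

/-- Two-dimensional sum comparison: for `m ≥ 1`, `mν > 1`, and any `l_n → ∞`,
the double sum `Σ_i Σ_j 1/((i²+j²)^m + cn²)^ν` is of exact order
`(cn²)^{-ν+1/m}`, uniformly for `c ∈ [l_n/n², n^{2m-2}]`, for large `n`. -/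

lemma tail_rpow_sum (p : ℝ) (hp : 1 < p) (M n : ℕ) (hM : 1 ≤ M) :
    ∑ s ∈ Finset.Ioc M n, (s : ℝ) ^ (-p) ≤ (M : ℝ) ^ (1 - p) / (p - 1) := by
  have hp1 : (0:ℝ) < p - 1 := by linarith
  have hM0 : (0:ℝ) < M := by exact_mod_cast hM
  rcases le_or_gt M n with h | h
  · have hanti : AntitoneOn (fun x : ℝ => x ^ (-p)) (Set.Icc (M:ℝ) (n:ℝ)) := by
      intro x hx y hy hxy
      exact Real.rpow_le_rpow_of_nonpos (lt_of_lt_of_le hM0 hx.1) hxy (by linarith)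
    have h1 := hanti.sum_le_integral_Ico h
    have h2 : ∑ s ∈ Finset.Ioc M n, (s : ℝ) ^ (-p)
        = ∑ i ∈ Finset.Ico M n, ((i + 1 : ℕ) : ℝ) ^ (-p) := by
      rw [Finset.sum_Ico_add' (fun s : ℕ => (s:ℝ) ^ (-p)) M n 1, Finset.Ico_add_one_add_one_eq_Ioc]
    rw [h2]
    have hMn : (M:ℝ) ≤ n := by exact_mod_cast h
    have h0 : (0:ℝ) ∉ Set.uIcc (M:ℝ) (n:ℝ) := by
      rw [Set.uIcc_of_le hMn]
      rintro ⟨h0, -⟩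
      exact absurd h0 (not_le.mpr hM0)
    rw [integral_rpow (Or.inr ⟨by intro hc; linarith, h0⟩)] at h1
    refine h1.trans ?_
    rw [show (-p + 1 : ℝ) = -(p-1) by ring] at *
    rw [show (1 - p : ℝ) = -(p-1) by ring]
    have hnn : 0 ≤ (n:ℝ) ^ (-(p-1)) := Real.rpow_nonneg (by positivity) _
    rw [div_neg, ← neg_div, neg_sub]
    exact (div_le_div_iff_of_pos_right hp1).mpr (by linarith)
  · rw [Finset.Ioc_eq_empty (by omega)]
    simp
    positivity

theorem double_sum_sobolev_comparison
    (m ν : ℝ) (hm : 1 ≤ m) (hν : 1 < m * ν)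
    (l : ℕ → ℝ) (hl : Filter.Tendsto l Filter.atTop Filter.atTop) :
    ∃ k K : ℝ, 0 < k ∧ k ≤ K ∧ ∃ N : ℕ, ∀ n : ℕ, N ≤ n → ∀ c : ℝ,
      l n / (n : ℝ) ^ 2 ≤ c → c ≤ (n : ℝ) ^ (2 * m - 2) →
      k * (c * (n : ℝ) ^ 2) ^ (-ν + 1 / m) ≤
        (∑ i ∈ Finset.Icc 1 n, ∑ j ∈ Finset.Icc 1 n,
          1 / (((i : ℝ) ^ 2 + (j : ℝ) ^ 2) ^ m + c * (n : ℝ) ^ 2) ^ ν) ∧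
      (∑ i ∈ Finset.Icc 1 n, ∑ j ∈ Finset.Icc 1 n,
          1 / (((i : ℝ) ^ 2 + (j : ℝ) ^ 2) ^ m + c * (n : ℝ) ^ 2) ^ ν) ≤
        K * (c * (n : ℝ) ^ 2) ^ (-ν + 1 / m) := by
  have hm0 : (0:ℝ) < m := lt_of_lt_of_le one_pos hm
  have hν0 : (0:ℝ) < ν := by nlinarith
  set p : ℝ := 2 * m * ν - 1 with hp_def
  have hp : 1 < p := by nlinarith
  refine ⟨((2:ℝ)^m + 1) ^ (-ν) / 4, 2 * (1 + (2:ℝ)^(p-1)/(p-1)), ?_, ?_, ?_⟩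
  · have : (0:ℝ) < (2:ℝ)^m + 1 := by positivity
    positivity
  · have h1 : ((2:ℝ)^m + 1) ^ (-ν) ≤ 1 :=
      Real.rpow_le_one_of_one_le_of_nonpos
        (by nlinarith [Real.rpow_nonneg (by norm_num : (0:ℝ) ≤ 2) m]) (by linarith)
    have h2 : (0:ℝ) ≤ (2:ℝ)^(p-1)/(p-1) := by
      apply div_nonneg (Real.rpow_nonneg (by norm_num) _) (by linarith)
    linarith
  obtain ⟨N₀, hN₀⟩ := Filter.eventually_atTop.mp (hl.eventually_ge_atTop ((2:ℝ)^(2*m)))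
  refine ⟨max N₀ 1, fun n hn c hc1 hc2 => ?_⟩
  -- basic facts
  have hn1 : 1 ≤ n := le_trans (le_max_right _ _) hn
  have hnR : (1:ℝ) ≤ (n:ℝ) := by exact_mod_cast hn1
  have hnpos : (0:ℝ) < (n:ℝ) := by linarith
  set A : ℝ := c * (n:ℝ)^2 with hA_def
  have h2m : (1:ℝ) ≤ (2:ℝ)^(2*m) := Real.one_le_rpow (by norm_num) (by linarith)
  have hA_lb : (2:ℝ)^(2*m) ≤ A := by
    have := hN₀ n (le_trans (le_max_left _ _) hn)
    have h := (div_le_iff₀ (by positivity : (0:ℝ) < (n:ℝ)^2)).mp hc1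
    linarith
  have hA1 : (1:ℝ) ≤ A := le_trans h2m hA_lb
  have hApos : (0:ℝ) < A := by linarith
  have hA_ub : A ≤ (n:ℝ)^(2*m) := by
    have h1 : A ≤ (n:ℝ)^(2*m-2) * (n:ℝ)^2 := by
      apply mul_le_mul_of_nonneg_right hc2 (by positivity)
    calc A ≤ (n:ℝ)^(2*m-2) * (n:ℝ)^2 := h1
      _ = (n:ℝ)^(2*m-2) * (n:ℝ)^((2:ℕ):ℝ) := by rw [Real.rpow_natCast]
      _ = (n:ℝ)^(2*m) := by rw [← Real.rpow_add hnpos]; norm_num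
  set R : ℝ := A ^ (1/(2*m)) with hR_def
  have hRpos : (0:ℝ) < R := Real.rpow_pos_of_pos hApos _
  have hR2 : (2:ℝ) ≤ R := by
    have := Real.rpow_le_rpow (by positivity) hA_lb (by positivity : (0:ℝ) ≤ 1/(2*m))
    calc (2:ℝ) = ((2:ℝ)^(2*m))^(1/(2*m)) := by
          rw [← Real.rpow_mul (by norm_num : (0:ℝ) ≤ 2), mul_one_div,
            div_self (by positivity : (2*m:ℝ) ≠ 0), Real.rpow_one]
      _ ≤ R := this
  have hRn : R ≤ (n:ℝ) := by
    have := Real.rpow_le_rpow (le_of_lt hApos) hA_ub (by positivity : (0:ℝ) ≤ 1/(2*m))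
    calc R ≤ ((n:ℝ)^(2*m))^(1/(2*m)) := this
      _ = (n:ℝ) := by
          rw [← Real.rpow_mul (by positivity), mul_one_div,
            div_self (by positivity : (2*m:ℝ) ≠ 0), Real.rpow_one]
  have hR2m : R ^ (2*m) = A := by
    rw [hR_def, ← Real.rpow_mul (le_of_lt hApos), one_div,
      inv_mul_cancel₀ (by positivity : (2*m:ℝ) ≠ 0), Real.rpow_one]
  have hRRA : R * R = A ^ (1/m) := by
    rw [hR_def, ← Real.rpow_add hApos]
    congr 1
    field_simp
    norm_num
  set M : ℕ := ⌊R⌋₊ with hM_def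
  have hM1 : 1 ≤ M := Nat.le_floor (by exact_mod_cast (by linarith : (1:ℝ) ≤ R))
  have hMR : (M:ℝ) ≤ R := Nat.floor_le (le_of_lt hRpos)
  have hMn : M ≤ n := by
    have : (M:ℝ) ≤ (n:ℝ) := le_trans hMR hRn
    exact_mod_cast this
  have hRM : R ≤ 2 * (M:ℝ) := by
    have h1 : R < (M:ℝ) + 1 := Nat.lt_floor_add_one R
    have h2 : (1:ℝ) ≤ (M:ℝ) := by exact_mod_cast hM1
    linarith
  have hTarget : A ^ (-ν + 1/m) = A^(-ν) * (R * R) := by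
    rw [Real.rpow_add hApos, hRRA]
  have hAν : (0:ℝ) ≤ A^(-ν) := Real.rpow_nonneg (le_of_lt hApos) _
  rw [hTarget]
  constructor
  · -- lower bound
    set f : ℕ → ℕ → ℝ := fun i j => 1 / (((i : ℝ) ^ 2 + (j : ℝ) ^ 2) ^ m + A) ^ ν with hf_def
    have hf_nonneg : ∀ i j : ℕ, 0 ≤ f i j := by
      intro i j
      have h1 : (0:ℝ) ≤ ((i : ℝ) ^ 2 + (j : ℝ) ^ 2) ^ m := Real.rpow_nonneg (by positivity) _
      have h2 : (0:ℝ) < ((i : ℝ) ^ 2 + (j : ℝ) ^ 2) ^ m + A := by linarith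
      positivity
    have hx : (0:ℝ) < ((2:ℝ)^m + 1) := by positivity
    set cst : ℝ := (((2:ℝ)^m + 1) * A) ^ (-ν) with hcst_def
    have hcst0 : 0 ≤ cst := Real.rpow_nonneg (by positivity) _
    have hterm : ∀ i ∈ Finset.Icc 1 M, ∀ j ∈ Finset.Icc 1 M, cst ≤ f i j := by
      intro i hi j hj
      have hiM : (i:ℝ) ≤ (M:ℝ) := by exact_mod_cast (Finset.mem_Icc.mp hi).2
      have hjM : (j:ℝ) ≤ (M:ℝ) := by exact_mod_cast (Finset.mem_Icc.mp hj).2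
      have hij : (i:ℝ)^2 + (j:ℝ)^2 ≤ 2 * R^2 := by
        have h1 : (i:ℝ)^2 ≤ R^2 := by
          apply pow_le_pow_left₀ (by positivity) (le_trans hiM hMR)
        have h2 : (j:ℝ)^2 ≤ R^2 := by
          apply pow_le_pow_left₀ (by positivity) (le_trans hjM hMR)
        linarith
      have hR2mA : ((R:ℝ)^(2:ℕ)) ^ m = A := by
        rw [← Real.rpow_natCast R 2, ← Real.rpow_mul (le_of_lt hRpos)]
        push_cast
        exact hR2m
      have hpow : ((i:ℝ)^2 + (j:ℝ)^2) ^ m ≤ 2^m * A := by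
        calc ((i:ℝ)^2 + (j:ℝ)^2) ^ m ≤ (2 * R^2) ^ m :=
              Real.rpow_le_rpow (by positivity) hij (le_of_lt hm0)
          _ = 2^m * (R^2)^m := Real.mul_rpow (by norm_num) (by positivity)
          _ = 2^m * A := by rw [hR2mA]
      have hbase : ((i:ℝ)^2 + (j:ℝ)^2) ^ m + A ≤ ((2:ℝ)^m + 1) * A := by
        have : ((2:ℝ)^m + 1) * A = 2^m * A + A := by ring
        linarith [this]
      have h1 : (((i:ℝ)^2 + (j:ℝ)^2) ^ m + A) ^ ν ≤ (((2:ℝ)^m + 1) * A) ^ ν := by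
        apply Real.rpow_le_rpow _ hbase (le_of_lt hν0)
        have := Real.rpow_nonneg (by positivity : (0:ℝ) ≤ (i:ℝ)^2 + (j:ℝ)^2) m
        linarith
      have h2 : (0:ℝ) < (((i:ℝ)^2 + (j:ℝ)^2) ^ m + A) ^ ν := by
        apply Real.rpow_pos_of_pos
        have := Real.rpow_nonneg (by positivity : (0:ℝ) ≤ (i:ℝ)^2 + (j:ℝ)^2) m
        linarith
      rw [hcst_def, Real.rpow_neg (by positivity), ← one_div]
      exact one_div_le_one_div_of_le h2 h1
    have hcard : (Finset.Icc 1 M).card = M := by simp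
    have hinner : ∀ i ∈ Finset.Icc 1 M, (M:ℝ) * cst ≤ ∑ j ∈ Finset.Icc 1 M, f i j := by
      intro i hi
      have := Finset.card_nsmul_le_sum (Finset.Icc 1 M) (f i) cst (hterm i hi)
      rwa [hcard, nsmul_eq_mul] at this
    have hlow : (M:ℝ) * ((M:ℝ) * cst) ≤ ∑ i ∈ Finset.Icc 1 M, ∑ j ∈ Finset.Icc 1 M, f i j := by
      have := Finset.card_nsmul_le_sum (Finset.Icc 1 M)
        (fun i => ∑ j ∈ Finset.Icc 1 M, f i j) ((M:ℝ) * cst) hinner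
      rwa [hcard, nsmul_eq_mul] at this
    have hsub : Finset.Icc 1 M ⊆ Finset.Icc 1 n := Finset.Icc_subset_Icc_right hMn
    have hmono : ∑ i ∈ Finset.Icc 1 M, ∑ j ∈ Finset.Icc 1 M, f i j
        ≤ ∑ i ∈ Finset.Icc 1 n, ∑ j ∈ Finset.Icc 1 n, f i j := by
      calc ∑ i ∈ Finset.Icc 1 M, ∑ j ∈ Finset.Icc 1 M, f i j
          ≤ ∑ i ∈ Finset.Icc 1 M, ∑ j ∈ Finset.Icc 1 n, f i j := by
            apply Finset.sum_le_sum
            intro i _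
            exact Finset.sum_le_sum_of_subset_of_nonneg hsub (fun j _ _ => hf_nonneg i j)
        _ ≤ ∑ i ∈ Finset.Icc 1 n, ∑ j ∈ Finset.Icc 1 n, f i j := by
            apply Finset.sum_le_sum_of_subset_of_nonneg hsub
            intro i _ _
            exact Finset.sum_nonneg (fun j _ => hf_nonneg i j)
    refine le_trans ?_ (le_trans hlow hmono)
    have hcst_eq : cst = ((2:ℝ)^m + 1)^(-ν) * A^(-ν) :=
      Real.mul_rpow (le_of_lt hx) (le_of_lt hApos)
    have hxν : (0:ℝ) ≤ ((2:ℝ)^m + 1)^(-ν) := Real.rpow_nonneg (le_of_lt hx) _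
    have hRR4 : R * R ≤ (2*(M:ℝ)) * (2*(M:ℝ)) :=
      mul_le_mul hRM hRM (le_of_lt hRpos) (by positivity)
    rw [hcst_eq]
    have ht : (0:ℝ) ≤ ((2:ℝ)^m + 1)^(-ν) * A^(-ν) := mul_nonneg hxν hAν
    linarith [mul_le_mul_of_nonneg_left hRR4 ht]
  · -- upper bound
    set f : ℕ → ℕ → ℝ := fun i j => 1 / (((i : ℝ) ^ 2 + (j : ℝ) ^ 2) ^ m + A) ^ ν with hf_def
    set g : ℕ → ℝ := fun s => 1 / (((s : ℝ) ^ 2) ^ m + A) ^ ν with hg_def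
    have hbase_pos : ∀ x : ℝ, 0 ≤ x → (0:ℝ) < x ^ m + A := by
      intro x hx
      have := Real.rpow_nonneg hx m
      linarith
    have hg_nonneg : ∀ s : ℕ, 0 ≤ g s := by
      intro s
      have h := hbase_pos ((s:ℝ)^2) (by positivity)
      rw [hg_def]
      positivity
    have hmono_f : ∀ x y : ℝ, 0 ≤ x → x ≤ y → 1/(y^m + A)^ν ≤ 1/(x^m + A)^ν := by
      intro x y hx hxy
      apply one_div_le_one_div_of_le (Real.rpow_pos_of_pos (hbase_pos x hx) ν)
      apply Real.rpow_le_rpow (le_of_lt (hbase_pos x hx)) _ (le_of_lt hν0)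
      have := Real.rpow_le_rpow hx hxy (le_of_lt hm0)
      linarith
    -- step 1 : termwise bound by max
    have step1 : ∀ i ∈ Finset.Icc 1 n, ∀ j ∈ Finset.Icc 1 n,
        f i j ≤ (if j ≤ i then g i else 0) + (if i ≤ j then g j else 0) := by
      intro i _ j _
      rcases le_total j i with h | h
      · have h1 : f i j ≤ g i := by
          apply hmono_f ((i:ℝ)^2) ((i:ℝ)^2 + (j:ℝ)^2) (by positivity)
            (le_add_of_nonneg_right (by positivity))
        have h2 : (0:ℝ) ≤ (if i ≤ j then g j else 0) := by
          split
          · exact hg_nonneg j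
          · exact le_rfl
        rw [if_pos h]
        linarith
      · have h1 : f i j ≤ g j := by
          have := hmono_f ((j:ℝ)^2) ((i:ℝ)^2 + (j:ℝ)^2) (by positivity)
            (le_add_of_nonneg_left (by positivity))
          rw [hf_def]
          exact this
        have h2 : (0:ℝ) ≤ (if j ≤ i then g i else 0) := by
          split
          · exact hg_nonneg i
          · exact le_rfl
        rw [if_pos h]
        linarith
    -- step 2 : reduce to 1D sum
    have hC : (∑ i ∈ Finset.Icc 1 n, ∑ j ∈ Finset.Icc 1 n, if j ≤ i then g i else 0)
        ≤ ∑ s ∈ Finset.Icc 1 n, (s:ℝ) * g s := by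
      apply Finset.sum_le_sum
      intro i hi
      have hfil : (Finset.Icc 1 n).filter (fun j => j ≤ i) ⊆ Finset.Icc 1 i := by
        intro x hx
        simp only [Finset.mem_filter, Finset.mem_Icc] at *
        omega
      calc (∑ j ∈ Finset.Icc 1 n, if j ≤ i then g i else 0)
          = ∑ j ∈ (Finset.Icc 1 n).filter (fun j => j ≤ i), g i := by
            rw [Finset.sum_filter]
        _ = (((Finset.Icc 1 n).filter (fun j => j ≤ i)).card : ℝ) * g i := by
            rw [Finset.sum_const, nsmul_eq_mul]
        _ ≤ (i:ℝ) * g i := by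
            apply mul_le_mul_of_nonneg_right _ (hg_nonneg i)
            have := Finset.card_le_card hfil
            have hci : (Finset.Icc 1 i).card = i := by simp
            rw [hci] at this
            exact_mod_cast this
    have hS2T : (∑ i ∈ Finset.Icc 1 n, ∑ j ∈ Finset.Icc 1 n, f i j)
        ≤ 2 * ∑ s ∈ Finset.Icc 1 n, (s:ℝ) * g s := by
      calc (∑ i ∈ Finset.Icc 1 n, ∑ j ∈ Finset.Icc 1 n, f i j)
          ≤ ∑ i ∈ Finset.Icc 1 n, ∑ j ∈ Finset.Icc 1 n,
            ((if j ≤ i then g i else 0) + (if i ≤ j then g j else 0)) :=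
            Finset.sum_le_sum (fun i hi => Finset.sum_le_sum (fun j hj => step1 i hi j hj))
        _ = (∑ i ∈ Finset.Icc 1 n, ∑ j ∈ Finset.Icc 1 n, if j ≤ i then g i else 0)
            + (∑ i ∈ Finset.Icc 1 n, ∑ j ∈ Finset.Icc 1 n, if i ≤ j then g j else 0) := by
            simp only [Finset.sum_add_distrib]
        _ = (∑ i ∈ Finset.Icc 1 n, ∑ j ∈ Finset.Icc 1 n, if j ≤ i then g i else 0)
            + (∑ j ∈ Finset.Icc 1 n, ∑ i ∈ Finset.Icc 1 n, if i ≤ j then g j else 0) := by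
            rw [Finset.sum_comm (s := Finset.Icc 1 n) (t := Finset.Icc 1 n)]
        _ ≤ (∑ s ∈ Finset.Icc 1 n, (s:ℝ) * g s) + (∑ s ∈ Finset.Icc 1 n, (s:ℝ) * g s) :=
            add_le_add hC hC
        _ = 2 * ∑ s ∈ Finset.Icc 1 n, (s:ℝ) * g s := by ring
    -- step 3 : split the 1D sum
    have hsplit : ∑ s ∈ Finset.Icc 1 n, (s:ℝ) * g s
        = (∑ s ∈ Finset.Ioc 0 M, (s:ℝ) * g s) + ∑ s ∈ Finset.Ioc M n, (s:ℝ) * g s := by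
      rw [show Finset.Icc 1 n = Finset.Ioc 0 n from Finset.Icc_add_one_left_eq_Ioc 0 n]
      exact (Finset.sum_Ioc_consecutive _ (Nat.zero_le M) hMn).symm
    -- head bound
    have hhead : (∑ s ∈ Finset.Ioc 0 M, (s:ℝ) * g s) ≤ (R * R) * A^(-ν) := by
      have hbd : ∀ s ∈ Finset.Ioc 0 M, (s:ℝ) * g s ≤ (M:ℝ) * A^(-ν) := by
        intro s hs
        have hsM : (s:ℝ) ≤ (M:ℝ) := by exact_mod_cast (Finset.mem_Ioc.mp hs).2
        have hgA : g s ≤ A^(-ν) := by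
          rw [Real.rpow_neg (le_of_lt hApos), ← one_div]
          have h0 := Real.rpow_nonneg (by positivity : (0:ℝ) ≤ (s:ℝ)^2) m
          apply one_div_le_one_div_of_le (Real.rpow_pos_of_pos hApos ν)
          exact Real.rpow_le_rpow (le_of_lt hApos) (by linarith) (le_of_lt hν0)
        exact mul_le_mul hsM hgA (hg_nonneg s) (by positivity)
      calc (∑ s ∈ Finset.Ioc 0 M, (s:ℝ) * g s)
          ≤ (Finset.Ioc 0 M).card • ((M:ℝ) * A^(-ν)) := Finset.sum_le_card_nsmul _ _ _ hbd
        _ = (M:ℝ) * ((M:ℝ) * A^(-ν)) := by simp [nsmul_eq_mul]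
        _ ≤ (R * R) * A^(-ν) := by
            have hMM : (M:ℝ) * (M:ℝ) ≤ R * R :=
              mul_le_mul hMR hMR (by positivity) (le_of_lt hRpos)
            have := mul_le_mul_of_nonneg_right hMM hAν
            linarith
    -- tail bound
    have htail : (∑ s ∈ Finset.Ioc M n, (s:ℝ) * g s)
        ≤ (2:ℝ)^(p-1)/(p-1) * ((R * R) * A^(-ν)) := by
      have hbd : ∀ s ∈ Finset.Ioc M n, (s:ℝ) * g s ≤ (s:ℝ)^(-p) := by
        intro s hs
        have hs1 : 1 ≤ s := le_trans hM1 (le_of_lt (Finset.mem_Ioc.mp hs).1)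
        have hs0 : (0:ℝ) < (s:ℝ) := by exact_mod_cast hs1
        have h2m' : ((s:ℝ)^2) ^ m = (s:ℝ) ^ (2*m) := by
          rw [← Real.rpow_natCast (s:ℝ) 2, ← Real.rpow_mul (le_of_lt hs0)]
          norm_num
        have hgs : g s ≤ (s:ℝ) ^ (-(2*m*ν)) := by
          have h3 : (0:ℝ) < (s:ℝ)^(2*m) := Real.rpow_pos_of_pos hs0 _
          have h1 : (s:ℝ)^(2*m) ≤ ((s:ℝ)^2)^m + A := by rw [h2m']; linarith
          calc g s ≤ 1 / ((s:ℝ)^(2*m)) ^ ν := by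
                apply one_div_le_one_div_of_le (Real.rpow_pos_of_pos h3 ν)
                exact Real.rpow_le_rpow (le_of_lt h3) h1 (le_of_lt hν0)
            _ = (s:ℝ) ^ (-(2*m*ν)) := by
                rw [← Real.rpow_mul (le_of_lt hs0), Real.rpow_neg (le_of_lt hs0),
                  one_div, mul_assoc]
        calc (s:ℝ) * g s ≤ (s:ℝ) * (s:ℝ)^(-(2*m*ν)) :=
              mul_le_mul_of_nonneg_left hgs (le_of_lt hs0)
          _ = (s:ℝ)^(-p) := by
              rw [show (s:ℝ) * (s:ℝ)^(-(2*m*ν)) = (s:ℝ)^(1:ℝ) * (s:ℝ)^(-(2*m*ν)) by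
                  rw [Real.rpow_one],
                ← Real.rpow_add hs0]
              congr 1
              rw [hp_def]; ring
      have hMge : R/2 ≤ (M:ℝ) := by linarith
      have hM1p : (M:ℝ)^(1-p) ≤ (R/2)^(1-p) :=
        Real.rpow_le_rpow_of_nonpos (by positivity) hMge (by linarith)
      have hRhalf : (R/2)^(1-p) = (2:ℝ)^(p-1) * R^(1-p) := by
        rw [Real.div_rpow (le_of_lt hRpos) (by norm_num), div_eq_mul_inv,
          ← Real.rpow_neg (by norm_num : (0:ℝ) ≤ 2), show -(1-p) = p-1 by ring]
        ring
      have hR1p : R^(1-p) = (R*R) * A^(-ν) := by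
        rw [show (1-p:ℝ) = 2 + (2*m)*(-ν) by rw [hp_def]; ring,
          Real.rpow_add hRpos, Real.rpow_mul (le_of_lt hRpos), hR2m]
        congr 1
        rw [show (2:ℝ) = ((2:ℕ):ℝ) by norm_num, Real.rpow_natCast]
        ring
      calc (∑ s ∈ Finset.Ioc M n, (s:ℝ) * g s)
          ≤ ∑ s ∈ Finset.Ioc M n, (s:ℝ)^(-p) := Finset.sum_le_sum hbd
        _ ≤ (M:ℝ)^(1-p)/(p-1) := tail_rpow_sum p hp M n hM1
        _ ≤ (R/2)^(1-p)/(p-1) :=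
            (div_le_div_iff_of_pos_right (by linarith : (0:ℝ) < p-1)).mpr hM1p
        _ = (2:ℝ)^(p-1)/(p-1) * ((R*R)*A^(-ν)) := by rw [hRhalf, hR1p]; ring
    refine hS2T.trans ?_
    rw [hsplit]
    have hsum := add_le_add hhead htail
    calc 2 * ((∑ s ∈ Finset.Ioc 0 M, (s:ℝ) * g s) + ∑ s ∈ Finset.Ioc M n, (s:ℝ) * g s)
        ≤ 2 * ((R*R)*A^(-ν) + (2:ℝ)^(p-1)/(p-1) * ((R*R)*A^(-ν))) := by linarith
      _ = 2 * (1 + (2:ℝ)^(p-1)/(p-1)) * (A^(-ν) * (R*R)) := by ring
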